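/- Let D ≥ 1 and let Q, Q^e : ℕ → ℝ, A : ℕ → ℝ≥0, F : ℕ → ℝ≥0 satisfy: Q(D) = Q^e(0) + ∑_{τ=0}^{D-1} A(τ); for all t ≥ D, Q(t+1) = max(0, Q(t) + A(t) − F(t)) and Q^e(t−D+1) = Q^e(t−D) + A(t−D) − F(t), with Q^e(t−D+1) ≥ 0. Then for all t ≥ D, Q(t) = Q^e(t−D) + ∑_{τ=t−D}^{t−1} A(τ). -/
import Mathlib


open Finset

/-- Uplink transmitter queue under UT with no service in the first `D` slots:
the real backlog equals the emulated backlog plus the last `D` arrivals. -/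
theorem stmt0 (D : ℕ) (hD : 1 ≤ D) (Q Qe : ℕ → ℝ) (A F : ℕ → NNReal)
    (hQD : Q D = Qe 0 + ∑ τ ∈ Finset.range D, (A τ : ℝ))
    (hQ : ∀ t, D ≤ t → Q (t + 1) = max 0 (Q t + (A t : ℝ) - (F t : ℝ)))
    (hQe : ∀ t, D ≤ t → Qe (t - D + 1) = Qe (t - D) + (A (t - D) : ℝ) - (F t : ℝ))
    (hQe_nonneg : ∀ t, D ≤ t → 0 ≤ Qe (t - D + 1)) :
    ∀ t, D ≤ t → Q t = Qe (t - D) + ∑ τ ∈ Finset.Ico (t - D) t, (A τ : ℝ) := by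
  intro t ht
  induction t, ht using Nat.le_induction with
  | base =>
    rw [Nat.sub_self, ← Finset.range_eq_Ico]; exact hQD
  | succ t ht ih =>
    have h1 : t - D < t := Nat.sub_lt (lt_of_lt_of_le hD ht) hD
    have hsum : (∑ τ ∈ Finset.Ico (t - D) t, (A τ : ℝ))
        = (A (t - D) : ℝ) + ∑ τ ∈ Finset.Ico (t - D + 1) t, (A τ : ℝ) := by
      exact Finset.sum_eq_sum_Ico_succ_bot h1 _
    have hsum2 : (∑ τ ∈ Finset.Ico (t - D + 1) (t + 1), (A τ : ℝ))
        = (∑ τ ∈ Finset.Ico (t - D + 1) t, (A τ : ℝ)) + (A t : ℝ) := by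
      rw [Finset.sum_Ico_succ_top (by omega)]
    have key : Q t + (A t : ℝ) - (F t : ℝ)
        = Qe (t - D + 1) + ∑ τ ∈ Finset.Ico (t - D + 1) (t + 1), (A τ : ℝ) := by
      rw [ih, hQe t ht, hsum, hsum2]; ring
    have hpos : (0:ℝ) ≤ ∑ τ ∈ Finset.Ico (t - D + 1) (t + 1), (A τ : ℝ) :=
      Finset.sum_nonneg fun _ _ => (A _).coe_nonneg
    have : Q (t + 1) = Qe (t - D + 1) + ∑ τ ∈ Finset.Ico (t - D + 1) (t + 1), (A τ : ℝ) := by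
      rw [hQ t ht, key, max_eq_right (by linarith [hQe_nonneg t ht])]
    rw [show t + 1 - D = t - D + 1 from by omega]; exact this
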